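/- Fix β > 0, n ≥ 1, real numbers a_1, …, a_n with a_i > 0 for every i, and a step size η > 0. Define L(w) = (1/n) ∑_{i=1}^n −log σ(β w a_i) with σ(z) = 1/(1 + exp(−z)), and define gradient-descent iterates w : ℕ → ℝ by w_{t+1} = w_t − η · L'(w_t) from any initialization w_0 ∈ ℝ. Then the sequence (w_t) is strictly increasing: w_{t+1} > w_t for all t. -/

import Mathlib

/-- The logistic sigmoid `σ(z) = 1/(1 + exp(−z))`. -/
noncomputable def logisticSigma (z : ℝ) : ℝ := 1 / (1 + Real.exp (-z))

lemma neg_log_logisticSigma (z : ℝ) :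
    -Real.log (logisticSigma z) = Real.log (1 + Real.exp (-z)) := by
  have h : (0:ℝ) < 1 + Real.exp (-z) := by positivity
  simp [logisticSigma, Real.log_div, Real.log_one, h.ne']

lemma dpo_hasDerivAt (β : ℝ) (n : ℕ) (a : Fin n → ℝ) (L : ℝ → ℝ)
    (hL : L = fun w : ℝ => (1 / (n : ℝ)) * ∑ i, -Real.log (logisticSigma (β * w * a i)))
    (x : ℝ) :
    HasDerivAt L ((1 / (n : ℝ)) * ∑ i,
      (-(β * a i) * Real.exp (-(β * x * a i)) / (1 + Real.exp (-(β * x * a i))))) x := by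
  have hL' : L = fun w : ℝ => (1 / (n : ℝ)) * ∑ i, Real.log (1 + Real.exp (-(β * w * a i))) := by
    rw [hL]; funext w; congr 1; exact Finset.sum_congr rfl fun i _ => neg_log_logisticSigma _
  rw [hL']
  apply HasDerivAt.const_mul
  apply HasDerivAt.fun_sum
  intro i _
  have h1 : HasDerivAt (fun w : ℝ => -(β * w * a i)) (-(β * a i)) x := by
    have : HasDerivAt (fun w : ℝ => β * w * a i) (β * a i) x := by
      simpa [mul_comm, mul_assoc, mul_left_comm] using
        ((hasDerivAt_id x).const_mul β).mul_const (a i)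
    simpa using this.fun_neg
  have h2 : HasDerivAt (fun w : ℝ => 1 + Real.exp (-(β * w * a i)))
      (-(β * a i) * Real.exp (-(β * x * a i))) x := by
    simpa [mul_comm] using (h1.exp.const_add 1)
  have hpos : (0:ℝ) < 1 + Real.exp (-(β * x * a i)) := by positivity
  simpa using h2.log hpos.ne'

/-- Gradient descent on the empirical DPO loss restricted to the environment weight,
`L(w) = (1/n) ∑ᵢ −log σ(β w aᵢ)` with all `aᵢ > 0`, produces a strictly increasing
sequence of weights: `w_{t+1} > w_t` for all `t`. -/
theorem dpo_gradient_descent_weight_strict_increasing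
    (β : ℝ) (hβ : 0 < β) (n : ℕ) (hn : 1 ≤ n) (a : Fin n → ℝ) (ha : ∀ i, 0 < a i)
    (η : ℝ) (hη : 0 < η)
    (L : ℝ → ℝ)
    (hL : L = fun w : ℝ => (1 / (n : ℝ)) * ∑ i, -Real.log (logisticSigma (β * w * a i)))
    (w : ℕ → ℝ) (hw : ∀ t, w (t + 1) = w t - η * deriv L (w t)) :
    ∀ t, w t < w (t + 1) := by
  intro t
  have hd := (dpo_hasDerivAt β n a L hL (w t)).deriv
  have hneg : deriv L (w t) < 0 := by
    rw [hd]
    apply mul_neg_of_pos_of_neg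
    · have : (0:ℝ) < n := by exact_mod_cast hn
      positivity
    · apply Finset.sum_neg
      · intro i _
        apply div_neg_of_neg_of_pos
        · have h1 : 0 < β * a i := mul_pos hβ (ha i)
          have := Real.exp_pos (-(β * w t * a i))
          nlinarith
        · positivity
      · exact Finset.univ_nonempty_iff.mpr (Fin.pos_iff_nonempty.mp (by omega))
  rw [hw t]
  nlinarith
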